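/- arXiv:2503.20717 — 3 statements merged into one kernel-verified Lean document; each statement's English description precedes it below -/
import Mathlib

section
/- Fix integers w ≥ 2, h ≥ 1, d ≥ 2. Let A_{w,h} be the h(w−1) × wh matrix over 𝔽₂ whose columns are indexed by Fin h × Fin w and whose row (r,c) (r ∈ Fin h, c ∈ Fin (w−1)) equals e_{(r,c)} + e_{(r,c+1)}, and let R_d be the (d−1) × d repetition check matrix over 𝔽₂. Form the hypergraph product check matrices H_X = [A_{w,h} ⊗ I_d | I_{h(w−1)} ⊗ R_dᵀ] and H_Z = [I_{wh} ⊗ R_d | A_{w,h}ᵀ ⊗ I_{d−1}]. Then the number of logical qubits of the resulting CSS code equals h: (whd + h(w−1)(d−1)) − rank(H_X) − rank(H_Z) = h. -/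
open Matrix
open scoped Kronecker

/-- The X-type check matrix of the hypergraph product code:
`H_X = [H1 ⊗ I_{n2} | I_{r1} ⊗ H2ᵀ]`. -/
def hgpX {R1 N1 R2 N2 : Type*} [DecidableEq R1] [DecidableEq N2]
    (H1 : Matrix R1 N1 (ZMod 2)) (H2 : Matrix R2 N2 (ZMod 2)) :
    Matrix (R1 × N2) ((N1 × N2) ⊕ (R1 × R2)) (ZMod 2) :=
  Matrix.fromCols (H1 ⊗ₖ (1 : Matrix N2 N2 (ZMod 2)))
    ((1 : Matrix R1 R1 (ZMod 2)) ⊗ₖ H2ᵀ)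

/-- The Z-type check matrix of the hypergraph product code:
`H_Z = [I_{n1} ⊗ H2 | H1ᵀ ⊗ I_{r2}]`. -/
def hgpZ {R1 N1 R2 N2 : Type*} [DecidableEq N1] [DecidableEq R2]
    (H1 : Matrix R1 N1 (ZMod 2)) (H2 : Matrix R2 N2 (ZMod 2)) :
    Matrix (N1 × R2) ((N1 × N2) ⊕ (R1 × R2)) (ZMod 2) :=
  Matrix.fromCols ((1 : Matrix N1 N1 (ZMod 2)) ⊗ₖ H2)
    (H1ᵀ ⊗ₖ (1 : Matrix R2 R2 (ZMod 2)))

/-- The (d−1) × d check matrix of the [d,1,d] repetition code over 𝔽₂: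
its `i`-th row is `e_i + e_{i+1}`. -/
def repMat (d : ℕ) : Matrix (Fin (d - 1)) (Fin d) (ZMod 2) :=
  Matrix.of fun i j => if (j : ℕ) = (i : ℕ) ∨ (j : ℕ) = (i : ℕ) + 1 then 1 else 0

/-- The check matrix of the "ab" pattern translated over a `w × h` grid: columns are indexed
by `Fin h × Fin w`, and the row indexed by `(r, c)` with `r : Fin h`, `c : Fin (w-1)` is
`e_{(r,c)} + e_{(r,c+1)}`. -/
def abMat (w h : ℕ) : Matrix (Fin h × Fin (w - 1)) (Fin h × Fin w) (ZMod 2) :=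
  Matrix.of fun rc xy =>
    if xy.1 = rc.1 ∧ ((xy.2 : ℕ) = (rc.2 : ℕ) ∨ (xy.2 : ℕ) = (rc.2 : ℕ) + 1) then 1 else 0


def repInv (d : ℕ) : Matrix (Fin d) (Fin (d - 1)) (ZMod 2) :=
  Matrix.of fun i j => if (i : ℕ) ≤ (j : ℕ) then 1 else 0

def abInv (w h : ℕ) : Matrix (Fin h × Fin w) (Fin h × Fin (w - 1)) (ZMod 2) :=
  Matrix.of fun xy rc => if xy.1 = rc.1 ∧ (xy.2 : ℕ) ≤ (rc.2 : ℕ) then 1 else 0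

lemma sum_pair {n a b : ℕ} (hn : a + 1 < n) :
    (∑ k ∈ Finset.range n, (if (k = a ∨ k = a + 1) ∧ k ≤ b then (1 : ZMod 2) else 0)) =
      if a = b then 1 else 0 := by
  have hsplit : ∀ k, (if (k = a ∨ k = a + 1) ∧ k ≤ b then (1 : ZMod 2) else 0) =
      (if k = a then (if a ≤ b then (1 : ZMod 2) else 0) else 0) +
      (if k = a + 1 then (if a + 1 ≤ b then (1 : ZMod 2) else 0) else 0) := by
    intro k
    split_ifs <;> simp_all <;> omega
  rw [Finset.sum_congr rfl fun k _ => hsplit k, Finset.sum_add_distrib,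
    Finset.sum_ite_eq' _ a, Finset.sum_ite_eq' _ (a + 1)]
  simp only [Finset.mem_range.mpr (by omega : a < n), Finset.mem_range.mpr hn, if_true]
  split_ifs <;> first | rfl | omega | decide

lemma repMat_mul_repInv (d : ℕ) (hd : 2 ≤ d) : repMat d * repInv d = 1 := by
  ext i j
  rw [Matrix.mul_apply]
  have h1 : ∀ k : Fin d, repMat d i k * repInv d k j =
      (if ((k : ℕ) = (i : ℕ) ∨ (k : ℕ) = (i : ℕ) + 1) ∧ (k : ℕ) ≤ (j : ℕ)
        then (1 : ZMod 2) else 0) := by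
    intro k
    simp only [repMat, repInv, Matrix.of_apply]
    split_ifs <;> simp_all
  rw [Finset.sum_congr rfl fun k _ => h1 k]
  rw [Fin.sum_univ_eq_sum_range
    (fun k => if (k = (i : ℕ) ∨ k = (i : ℕ) + 1) ∧ k ≤ (j : ℕ) then (1 : ZMod 2) else 0)]
  rw [sum_pair (by omega : (i : ℕ) + 1 < d)]
  simp [Matrix.one_apply, Fin.ext_iff]

lemma abMat_mul_abInv (w h : ℕ) (hw : 2 ≤ w) : abMat w h * abInv w h = 1 := by
  ext ⟨r, c⟩ ⟨r₂, c₂⟩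
  rw [Matrix.mul_apply, Fintype.sum_prod_type]
  have h1 : ∀ (x : Fin h) (y : Fin w),
      abMat w h (r, c) (x, y) * abInv w h (x, y) (r₂, c₂) =
      (if x = r ∧ x = r₂ then (1 : ZMod 2) else 0) *
      (if ((y : ℕ) = (c : ℕ) ∨ (y : ℕ) = (c : ℕ) + 1) ∧ (y : ℕ) ≤ (c₂ : ℕ)
        then (1 : ZMod 2) else 0) := by
    intro x y
    by_cases hxr : x = r
    · subst hxr
      simp only [abMat, abInv, Matrix.of_apply]
      split_ifs <;> simp_all
    · simp [abMat, abInv, hxr]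
  rw [Finset.sum_congr rfl fun x _ => Finset.sum_congr rfl fun y _ => h1 x y]
  simp only [← Finset.mul_sum, ← Finset.sum_mul]
  rw [Fin.sum_univ_eq_sum_range
    (fun k => if (k = (c : ℕ) ∨ k = (c : ℕ) + 1) ∧ k ≤ (c₂ : ℕ) then (1 : ZMod 2) else 0)]
  rw [sum_pair (by omega : (c : ℕ) + 1 < w)]
  have hx : (∑ x : Fin h, if x = r ∧ x = r₂ then (1 : ZMod 2) else 0) =
      if r = r₂ then 1 else 0 := by
    by_cases hr : r = r₂
    · subst hr; simp
    · simp only [hr, if_false]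
      apply Finset.sum_eq_zero
      intro x _
      split_ifs with hc
      · exact absurd (hc.1.symm.trans hc.2) hr
      · rfl
  rw [hx]
  simp only [Matrix.one_apply, Prod.mk.injEq, Fin.ext_iff]
  split_ifs <;> simp_all

lemma rank_eq_card_of_rightInv {m n : Type*} [Fintype m] [Fintype n] [DecidableEq m]
    (M : Matrix m n (ZMod 2)) (N : Matrix n m (ZMod 2)) (hMN : M * N = 1) :
    M.rank = Fintype.card m := by
  refine le_antisymm (Matrix.rank_le_card_height M) ?_
  calc Fintype.card m = (1 : Matrix m m (ZMod 2)).rank := (Matrix.rank_one).symm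
    _ = (M * N).rank := by rw [hMN]
    _ ≤ M.rank := Matrix.rank_mul_le_left M N

/-- The hypergraph product of the "ab"-pattern code `abMat w h` with the repetition code
`R_d` encodes exactly `h` logical qubits:
`(whd + h(w−1)(d−1)) − rank(H_X) − rank(H_Z) = h`. -/
theorem ab_rep_hgp_logical_qubits (w h d : ℕ) (hw : 2 ≤ w) (hh : 1 ≤ h) (hd : 2 ≤ d) :
    (w * h * d + h * (w - 1) * (d - 1)) -
        (hgpX (abMat w h) (repMat d)).rank - (hgpZ (abMat w h) (repMat d)).rank = h := by
  have hX : (hgpX (abMat w h) (repMat d)).rank = h * (w - 1) * d := by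
    have : hgpX (abMat w h) (repMat d) *
        Matrix.fromRows (abInv w h ⊗ₖ (1 : Matrix (Fin d) (Fin d) (ZMod 2)))
          (0 : Matrix ((Fin h × Fin (w - 1)) × Fin (d - 1)) _ _) = 1 := by
      rw [hgpX, Matrix.fromCols_mul_fromRows, ← Matrix.mul_kronecker_mul,
        abMat_mul_abInv w h hw, Matrix.mul_one, Matrix.mul_zero, add_zero,
        Matrix.one_kronecker_one]
    rw [rank_eq_card_of_rightInv _ _ this]
    simp only [Fintype.card_prod, Fintype.card_fin]
    try ring
  have hZ : (hgpZ (abMat w h) (repMat d)).rank = w * h * (d - 1) := by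
    have : hgpZ (abMat w h) (repMat d) *
        Matrix.fromRows ((1 : Matrix (Fin h × Fin w) (Fin h × Fin w) (ZMod 2)) ⊗ₖ repInv d)
          (0 : Matrix ((Fin h × Fin (w - 1)) × Fin (d - 1)) _ _) = 1 := by
      rw [hgpZ, Matrix.fromCols_mul_fromRows, ← Matrix.mul_kronecker_mul,
        repMat_mul_repInv d hd, Matrix.mul_one, Matrix.mul_zero, add_zero,
        Matrix.one_kronecker_one]
    rw [rank_eq_card_of_rightInv _ _ this]
    simp only [Fintype.card_prod, Fintype.card_fin]
    try ring
  rw [hX, hZ]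
  obtain ⟨a, rfl⟩ : ∃ a, w = a + 2 := ⟨w - 2, by omega⟩
  obtain ⟨b, rfl⟩ : ∃ b, d = b + 2 := ⟨d - 2, by omega⟩
  have e1 : a + 2 - 1 = a + 1 := rfl
  have e2 : b + 2 - 1 = b + 1 := rfl
  rw [e1, e2]
  have key : (a + 2) * h * (b + 2) + h * (a + 1) * (b + 1) =
      h + h * (a + 1) * (b + 2) + (a + 2) * h * (b + 1) := by ring
  omega
end

section
/- Fix integers w ≥ 2, h ≥ 1, d ≥ 2. Let A_{w,h} be the h(w−1) × wh matrix over 𝔽₂ whose columns are indexed by Fin h × Fin w and whose row (r,c) (r ∈ Fin h, c ∈ Fin (w−1)) equals e_{(r,c)} + e_{(r,c+1)}, and let R_d be the (d−1) × d repetition check matrix over 𝔽₂. Form the hypergraph product check matrices H_X = [A_{w,h} ⊗ I_d | I_{h(w−1)} ⊗ R_dᵀ] and H_Z = [I_{wh} ⊗ R_d | A_{w,h}ᵀ ⊗ I_{d−1}]. Then the CSS code distance min(d_X, d_Z) of this code equals min(w, d), where d_Z is the minimum Hamming weight of a vector v with H_X · v = 0 that does not lie in the row space of H_Z, and d_X is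 the minimum Hamming weight of a vector v with H_Z · v = 0 that does not lie in the row space of H_X. -/
open Matrix
open scoped Kronecker

/-- The Hamming weight of a vector over 𝔽₂: its number of nonzero entries. -/
def wt {ι : Type*} [Fintype ι] (v : ι → ZMod 2) : ℕ :=
  (Finset.univ.filter fun i => v i ≠ 0).card

/-! ### Auxiliary lemmas -/

namespace AbRepAux

lemma z2_eq_of_add_eq_zero {a b : ZMod 2} (hab : a + b = 0) : a = b := by
  rw [← sub_eq_zero]
  simpa [sub_eq_add_neg, CharTwo.neg_eq] using hab

lemma deltaOne {n : ℕ} (m : ℕ) (f : ℕ → ZMod 2) :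
    (∑ j : Fin n, if (j:ℕ) = m then f j else 0) = if m < n then f m else 0 := by
  by_cases hm : m < n
  · rw [if_pos hm, Fintype.sum_eq_single (⟨m, hm⟩ : Fin n)]
    · simp
    · intro b hb
      rw [if_neg]
      simpa [Fin.ext_iff] using hb
  · rw [if_neg hm, Finset.sum_eq_zero]
    intro j _
    rw [if_neg]
    omega

lemma deltaA {n : ℕ} (m : ℕ) (hm : m + 1 < n) (f : ℕ → ZMod 2) :
    (∑ j : Fin n, if ((j:ℕ) = m ∨ (j:ℕ) = m + 1) then f j else 0) = f m + f (m+1) := by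
  have key : ∀ j : Fin n, (if ((j:ℕ) = m ∨ (j:ℕ) = m + 1) then f j else 0)
      = (if (j:ℕ) = m then f j else 0) + (if (j:ℕ) = m + 1 then f j else 0) := by
    intro j
    split_ifs <;> first | omega | simp
  simp only [key, Finset.sum_add_distrib, deltaOne, if_pos hm, if_pos (by omega : m < n)]

lemma deltaB {n : ℕ} (m : ℕ) (f : ℕ → ZMod 2) :
    (∑ c : Fin n, if (m = (c:ℕ) ∨ m = (c:ℕ) + 1) then f c else 0)
      = (if m < n then f m else 0) + (if 1 ≤ m ∧ m - 1 < n then f (m-1) else 0) := by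
  have key : ∀ c : Fin n, (if (m = (c:ℕ) ∨ m = (c:ℕ) + 1) then f c else 0)
      = (if (c:ℕ) = m then f c else 0)
        + (if 1 ≤ m then (if (c:ℕ) = m - 1 then f c else 0) else 0) := by
    intro c
    split_ifs <;> first | omega | simp
  simp only [key, Finset.sum_add_distrib, deltaOne]
  congr 1
  by_cases h1 : 1 ≤ m
  · simp only [h1, if_pos, true_and, deltaOne]
  · simp [h1]

/-- char-2 telescoping sum -/
lemma telescope (f : ℕ → ZMod 2) (n : ℕ) :
    (∑ x ∈ Finset.range (n+1), (f x + if 1 ≤ x then f (x-1) else 0)) = f n := by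
  induction n with
  | zero => simp
  | succ n ih =>
      rw [Finset.sum_range_succ, ih]
      have h1 : (if 1 ≤ n + 1 then f (n+1-1) else 0) = f n := by simp
      rw [h1]
      have : f n + (f (n+1) + f n) = f (n+1) + (f n + f n) := by ring
      rw [this, CharTwo.add_self_eq_zero, add_zero]

/-- the pairing obstruction to membership in the row space -/
lemma not_mem_range_of_pairing {ι κ : Type*} [Fintype ι] [Fintype κ]
    (M : Matrix κ ι (ZMod 2)) (c vv : ι → ZMod 2)
    (hc : M.mulVec c = 0) (hp : vv ⬝ᵥ c = 1) :
    vv ∉ LinearMap.range M.vecMulLinear := by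
  rintro ⟨u, rfl⟩
  have h1 : M.vecMulLinear u = M.vecMul u := rfl
  rw [h1] at hp
  rw [← Matrix.dotProduct_mulVec, hc] at hp
  simp [dotProduct] at hp

section Ext

variable {w h d : ℕ}

/-- zero-extended first-block coordinates -/
def aE (v : ((Fin h × Fin w) × Fin d) ⊕ ((Fin h × Fin (w-1)) × Fin (d-1)) → ZMod 2)
    (r : Fin h) (x j : ℕ) : ZMod 2 :=
  if hx : x < w then if hj : j < d then v (Sum.inl ((r, ⟨x,hx⟩), ⟨j,hj⟩)) else 0 else 0

/-- zero-extended second-block coordinates -/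
def bE (v : ((Fin h × Fin w) × Fin d) ⊕ ((Fin h × Fin (w-1)) × Fin (d-1)) → ZMod 2)
    (r : Fin h) (c j : ℕ) : ZMod 2 :=
  if hc : c < w-1 then if hj : j < d-1 then v (Sum.inr ((r, ⟨c,hc⟩), ⟨j,hj⟩)) else 0 else 0

/-- zero-extension of a coefficient vector for the rows of `hgpX` -/
def uXE (u : (Fin h × Fin (w-1)) × Fin d → ZMod 2) (r : Fin h) (c j : ℕ) : ZMod 2 :=
  if hc : c < w-1 then if hj : j < d then u ((r, ⟨c,hc⟩), ⟨j,hj⟩) else 0 else 0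

/-- zero-extension of a coefficient vector for the rows of `hgpZ` -/
def uZE (u : (Fin h × Fin w) × Fin (d-1) → ZMod 2) (r : Fin h) (x j : ℕ) : ZMod 2 :=
  if hx : x < w then if hj : j < d-1 then u ((r, ⟨x,hx⟩), ⟨j,hj⟩) else 0 else 0

lemma aE_of (v : ((Fin h × Fin w) × Fin d) ⊕ ((Fin h × Fin (w-1)) × Fin (d-1)) → ZMod 2)
    (r : Fin h) (x : Fin w) (j : Fin d) : aE v r x j = v (Sum.inl ((r, x), j)) := by
  simp [aE]

lemma bE_of (v : ((Fin h × Fin w) × Fin d) ⊕ ((Fin h × Fin (w-1)) × Fin (d-1)) → ZMod 2)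
    (r : Fin h) (c : Fin (w-1)) (j : Fin (d-1)) : bE v r c j = v (Sum.inr ((r, c), j)) := by
  simp [bE]

lemma uXE_of (u : (Fin h × Fin (w-1)) × Fin d → ZMod 2) (r : Fin h) (c : Fin (w-1)) (j : Fin d) :
    uXE u r c j = u ((r, c), j) := by
  simp [uXE]

lemma uZE_of (u : (Fin h × Fin w) × Fin (d-1) → ZMod 2) (r : Fin h) (x : Fin w) (j : Fin (d-1)) :
    uZE u r x j = u ((r, x), j) := by
  simp [uZE]

lemma mulVecZ_apply
    (v : ((Fin h × Fin w) × Fin d) ⊕ ((Fin h × Fin (w-1)) × Fin (d-1)) → ZMod 2)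
    (r : Fin h) (x : Fin w) (j2 : Fin (d-1)) :
    (hgpZ (abMat w h) (repMat d)).mulVec v ((r,x), j2)
      = aE v r x j2 + aE v r x (j2+1)
        + (bE v r x j2 + (if 1 ≤ (x:ℕ) then bE v r ((x:ℕ)-1) j2 else 0)) := by
  simp only [Matrix.mulVec, dotProduct, Fintype.sum_sum_type, hgpZ, Matrix.fromCols,
    Matrix.of_apply, Sum.elim_inl, Sum.elim_inr, Matrix.kroneckerMap_apply,
    Fintype.sum_prod_type, Matrix.one_apply, Matrix.transpose_apply, ite_mul, one_mul, zero_mul,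
    Finset.sum_ite_irrel, Finset.sum_const_zero,
    Finset.sum_ite_eq, Finset.mem_univ, if_true, repMat, abMat, Prod.mk.injEq, ite_and]
  congr 1
  · have h1 : ∀ x2 : Fin d, v (Sum.inl ((r, x), x2)) = aE v r x x2 :=
      fun x2 => (aE_of v r x x2).symm
    simp only [h1]
    rw [deltaA (↑j2) (by omega) (fun j => aE v r ↑x j)]
  · have h2 : ∀ x2 : Fin (w-1), v (Sum.inr ((r, x2), j2)) = bE v r x2 j2 :=
      fun x2 => (bE_of v r x2 j2).symm
    simp only [h2]
    rw [deltaB (↑x) (fun c => bE v r c ↑j2)]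
    congr 1
    · by_cases hx : (x:ℕ) < w - 1
      · rw [if_pos hx]
      · rw [if_neg hx]
        simp [bE, hx]
    · by_cases hx : 1 ≤ (x:ℕ)
      · rw [if_pos (⟨hx, by omega⟩ : 1 ≤ (x:ℕ) ∧ (x:ℕ) - 1 < w - 1), if_pos hx]
      · rw [if_neg (by omega), if_neg hx]

lemma mulVecX_apply
    (v : ((Fin h × Fin w) × Fin d) ⊕ ((Fin h × Fin (w-1)) × Fin (d-1)) → ZMod 2)
    (r : Fin h) (c : Fin (w-1)) (j : Fin d) :
    (hgpX (abMat w h) (repMat d)).mulVec v ((r,c), j)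
      = aE v r c j + aE v r ((c:ℕ)+1) j
        + (bE v r c j + (if 1 ≤ (j:ℕ) then bE v r c ((j:ℕ)-1) else 0)) := by
  simp only [Matrix.mulVec, dotProduct, Fintype.sum_sum_type, hgpX, Matrix.fromCols,
    Matrix.of_apply, Sum.elim_inl, Sum.elim_inr, Matrix.kroneckerMap_apply,
    Fintype.sum_prod_type, Matrix.one_apply, Matrix.transpose_apply, ite_mul, one_mul, zero_mul,
    Finset.sum_ite_irrel, Finset.sum_const_zero, Finset.sum_ite_eq, Finset.sum_ite_eq',
    Finset.mem_univ, if_true, repMat, abMat, Prod.mk.injEq, ite_and]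
  congr 1
  · have h1 : ∀ x2 : Fin w, v (Sum.inl ((r, x2), j)) = aE v r x2 j :=
      fun x2 => (aE_of v r x2 j).symm
    simp only [h1]
    rw [deltaA (↑c) (by omega) (fun x => aE v r x ↑j)]
  · have h2 : ∀ j2 : Fin (d-1), v (Sum.inr ((r, c), j2)) = bE v r c j2 :=
      fun j2 => (bE_of v r c j2).symm
    simp only [h2]
    rw [deltaB (↑j) (fun j' => bE v r ↑c j')]
    congr 1
    · by_cases hj : (j:ℕ) < d - 1
      · rw [if_pos hj]
      · rw [if_neg hj]
        simp [bE, hj]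
    · by_cases hj : 1 ≤ (j:ℕ)
      · rw [if_pos (⟨hj, by omega⟩ : 1 ≤ (j:ℕ) ∧ (j:ℕ) - 1 < d - 1), if_pos hj]
      · rw [if_neg (by omega), if_neg hj]

lemma vecMulX_apply_inl (u : (Fin h × Fin (w-1)) × Fin d → ZMod 2)
    (r : Fin h) (x : Fin w) (j : Fin d) :
    (hgpX (abMat w h) (repMat d)).vecMul u (Sum.inl ((r,x), j))
      = uXE u r x j + (if 1 ≤ (x:ℕ) then uXE u r ((x:ℕ)-1) j else 0) := by
  simp only [Matrix.vecMul, dotProduct, hgpX, Matrix.fromCols,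
    Matrix.of_apply, Sum.elim_inl, Sum.elim_inr, Matrix.kroneckerMap_apply,
    Fintype.sum_prod_type, Matrix.one_apply, Matrix.transpose_apply, mul_ite, mul_one, mul_zero,
    Finset.sum_ite_irrel, Finset.sum_const_zero, Finset.sum_ite_eq, Finset.sum_ite_eq',
    Finset.mem_univ, if_true, repMat, abMat, Prod.mk.injEq, ite_and]
  have h1 : ∀ c : Fin (w-1), u ((r, c), j) = uXE u r c j := fun c => (uXE_of u r c j).symm
  simp only [h1]
  rw [deltaB (↑x) (fun c => uXE u r c ↑j)]
  congr 1
  · by_cases hx : (x:ℕ) < w - 1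
    · rw [if_pos hx]
    · rw [if_neg hx]
      simp [uXE, hx]
  · by_cases hx : 1 ≤ (x:ℕ)
    · rw [if_pos (⟨hx, by omega⟩ : 1 ≤ (x:ℕ) ∧ (x:ℕ) - 1 < w - 1), if_pos hx]
    · rw [if_neg (by omega), if_neg hx]

lemma vecMulX_apply_inr (u : (Fin h × Fin (w-1)) × Fin d → ZMod 2)
    (r : Fin h) (c : Fin (w-1)) (j2 : Fin (d-1)) :
    (hgpX (abMat w h) (repMat d)).vecMul u (Sum.inr ((r,c), j2))
      = uXE u r c j2 + uXE u r c ((j2:ℕ)+1) := by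
  simp only [Matrix.vecMul, dotProduct, hgpX, Matrix.fromCols,
    Matrix.of_apply, Sum.elim_inl, Sum.elim_inr, Matrix.kroneckerMap_apply,
    Fintype.sum_prod_type, Matrix.one_apply, Matrix.transpose_apply, mul_ite, mul_one, mul_zero,
    Finset.sum_ite_irrel, Finset.sum_const_zero, Finset.sum_ite_eq, Finset.sum_ite_eq',
    Finset.mem_univ, if_true, repMat, abMat, Prod.mk.injEq, ite_and]
  have key : ∀ (s : Fin h) (c' : Fin (w-1)) (x2 : Fin d),
      (if (x2:ℕ) = (j2:ℕ) ∨ (x2:ℕ) = (j2:ℕ) + 1 then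
        if s = r then if c' = c then u ((s, c'), x2) else 0 else 0 else 0)
      = (if s = r then if c' = c then
          (if (x2:ℕ) = (j2:ℕ) ∨ (x2:ℕ) = (j2:ℕ) + 1 then u ((s, c'), x2) else 0)
          else 0 else 0) := by
    intro s c' x2
    split_ifs <;> rfl
  simp only [key, Finset.sum_ite_irrel, Finset.sum_const_zero, Finset.sum_ite_eq,
    Finset.sum_ite_eq', Finset.mem_univ, if_true]
  have h1 : ∀ j : Fin d, u ((r, c), j) = uXE u r c j := fun j => (uXE_of u r c j).symm
  simp only [h1]
  rw [deltaA (↑j2) (by omega) (fun j => uXE u r ↑c j)]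

lemma vecMulZ_apply_inl (u : (Fin h × Fin w) × Fin (d-1) → ZMod 2)
    (r : Fin h) (x : Fin w) (j : Fin d) :
    (hgpZ (abMat w h) (repMat d)).vecMul u (Sum.inl ((r,x), j))
      = uZE u r x j + (if 1 ≤ (j:ℕ) then uZE u r x ((j:ℕ)-1) else 0) := by
  simp only [Matrix.vecMul, dotProduct, hgpZ, Matrix.fromCols,
    Matrix.of_apply, Sum.elim_inl, Sum.elim_inr, Matrix.kroneckerMap_apply,
    Fintype.sum_prod_type, Matrix.one_apply, Matrix.transpose_apply, mul_ite, mul_one, mul_zero,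
    Finset.sum_ite_irrel, Finset.sum_const_zero, Finset.sum_ite_eq, Finset.sum_ite_eq',
    Finset.mem_univ, if_true, repMat, abMat, Prod.mk.injEq, ite_and]
  have key : ∀ (s : Fin h) (x' : Fin w) (r2 : Fin (d-1)),
      (if (j:ℕ) = (r2:ℕ) ∨ (j:ℕ) = (r2:ℕ) + 1 then
        if s = r then if x' = x then u ((s, x'), r2) else 0 else 0 else 0)
      = (if s = r then if x' = x then
          (if (j:ℕ) = (r2:ℕ) ∨ (j:ℕ) = (r2:ℕ) + 1 then u ((s, x'), r2) else 0)
          else 0 else 0) := by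
    intro s x' r2
    split_ifs <;> rfl
  simp only [key, Finset.sum_ite_irrel, Finset.sum_const_zero, Finset.sum_ite_eq,
    Finset.sum_ite_eq', Finset.mem_univ, if_true]
  have h1 : ∀ r2 : Fin (d-1), u ((r, x), r2) = uZE u r x r2 := fun r2 => (uZE_of u r x r2).symm
  simp only [h1]
  rw [deltaB (↑j) (fun j' => uZE u r ↑x j')]
  congr 1
  · by_cases hj : (j:ℕ) < d - 1
    · rw [if_pos hj]
    · rw [if_neg hj]
      simp [uZE, hj]
  · by_cases hj : 1 ≤ (j:ℕ)
    · rw [if_pos (⟨hj, by omega⟩ : 1 ≤ (j:ℕ) ∧ (j:ℕ) - 1 < d - 1), if_pos hj]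
    · rw [if_neg (by omega), if_neg hj]

lemma vecMulZ_apply_inr (u : (Fin h × Fin w) × Fin (d-1) → ZMod 2)
    (r : Fin h) (c : Fin (w-1)) (j2 : Fin (d-1)) :
    (hgpZ (abMat w h) (repMat d)).vecMul u (Sum.inr ((r,c), j2))
      = uZE u r c j2 + uZE u r ((c:ℕ)+1) j2 := by
  simp only [Matrix.vecMul, dotProduct, hgpZ, Matrix.fromCols,
    Matrix.of_apply, Sum.elim_inl, Sum.elim_inr, Matrix.kroneckerMap_apply,
    Fintype.sum_prod_type, Matrix.one_apply, Matrix.transpose_apply, mul_ite, mul_one, mul_zero,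
    Finset.sum_ite_irrel, Finset.sum_const_zero, Finset.sum_ite_eq, Finset.sum_ite_eq',
    Finset.mem_univ, if_true, repMat, abMat, Prod.mk.injEq, ite_and]
  have h1 : ∀ x : Fin w, u ((r, x), j2) = uZE u r x j2 := fun x => (uZE_of u r x j2).symm
  simp only [h1]
  rw [deltaA (↑c) (by omega) (fun x => uZE u r x ↑j2)]


lemma z2_cancel (a b : ZMod 2) : b + a + b = a := by
  have hb := CharTwo.add_self_eq_zero b
  linear_combination hb

lemma kerZ_cond (v : ((Fin h × Fin w) × Fin d) ⊕ ((Fin h × Fin (w-1)) × Fin (d-1)) → ZMod 2)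
    (hv : (hgpZ (abMat w h) (repMat d)).mulVec v = 0)
    (r : Fin h) {x j2 : ℕ} (hx : x < w) (hj2 : j2 < d - 1) :
    aE v r x j2 + aE v r x (j2+1)
      + (bE v r x j2 + (if 1 ≤ x then bE v r (x-1) j2 else 0)) = 0 := by
  have h0 := congrFun hv ((r, ⟨x,hx⟩), ⟨j2,hj2⟩)
  rw [mulVecZ_apply] at h0
  simpa using h0

lemma kerX_cond (v : ((Fin h × Fin w) × Fin d) ⊕ ((Fin h × Fin (w-1)) × Fin (d-1)) → ZMod 2)
    (hv : (hgpX (abMat w h) (repMat d)).mulVec v = 0)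
    (r : Fin h) {c j : ℕ} (hc : c < w - 1) (hj : j < d) :
    aE v r c j + aE v r (c+1) j
      + (bE v r c j + (if 1 ≤ j then bE v r c (j-1) else 0)) = 0 := by
  have h0 := congrFun hv ((r, ⟨c,hc⟩), ⟨j,hj⟩)
  rw [mulVecX_apply] at h0
  simpa using h0

/-- column sums of the first block, in a fixed grid row `r` -/
def sZ (v : ((Fin h × Fin w) × Fin d) ⊕ ((Fin h × Fin (w-1)) × Fin (d-1)) → ZMod 2)
    (r : Fin h) (j : ℕ) : ZMod 2 :=
  ∑ x ∈ Finset.range w, aE v r x j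

/-- row sums of the first block, in a fixed grid row `r` -/
def sX (v : ((Fin h × Fin w) × Fin d) ⊕ ((Fin h × Fin (w-1)) × Fin (d-1)) → ZMod 2)
    (r : Fin h) (x : ℕ) : ZMod 2 :=
  ∑ j ∈ Finset.range d, aE v r x j

lemma sZ_const (hw : 2 ≤ w)
    (v : ((Fin h × Fin w) × Fin d) ⊕ ((Fin h × Fin (w-1)) × Fin (d-1)) → ZMod 2)
    (hv : (hgpZ (abMat w h) (repMat d)).mulVec v = 0)
    (r : Fin h) {j : ℕ} (hj : j < d) : sZ v r j = sZ v r 0 := by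
  induction j with
  | zero => rfl
  | succ j ih =>
      rw [← ih (by omega)]
      symm
      apply z2_eq_of_add_eq_zero
      have hsum : ∑ x ∈ Finset.range w,
          (aE v r x j + aE v r x (j+1)
            + (bE v r x j + (if 1 ≤ x then bE v r (x-1) j else 0))) = 0 :=
        Finset.sum_eq_zero fun x hx =>
          kerZ_cond v hv r (Finset.mem_range.mp hx) (by omega)
      rw [Finset.sum_add_distrib, Finset.sum_add_distrib, Finset.sum_add_distrib] at hsum
      have e1 : ∑ x ∈ Finset.range w, bE v r x j = ∑ x ∈ Finset.range (w-1), bE v r x j := by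
        rw [show Finset.range w = Finset.range ((w-1)+1) by
          rw [Nat.sub_add_cancel (by omega)], Finset.sum_range_succ]
        simp [bE]
      have e2 : ∑ x ∈ Finset.range w, (if 1 ≤ x then bE v r (x-1) j else 0)
          = ∑ x ∈ Finset.range (w-1), bE v r x j := by
        rw [show Finset.range w = Finset.range ((w-1)+1) by
          rw [Nat.sub_add_cancel (by omega)], Finset.sum_range_succ']
        simp
      rw [e1, e2, CharTwo.add_self_eq_zero, add_zero] at hsum
      exact hsum

lemma sX_const (hd : 2 ≤ d)
    (v : ((Fin h × Fin w) × Fin d) ⊕ ((Fin h × Fin (w-1)) × Fin (d-1)) → ZMod 2)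
    (hv : (hgpX (abMat w h) (repMat d)).mulVec v = 0)
    (r : Fin h) {x : ℕ} (hx : x < w) : sX v r x = sX v r 0 := by
  induction x with
  | zero => rfl
  | succ x ih =>
      rw [← ih (by omega)]
      symm
      apply z2_eq_of_add_eq_zero
      have hsum : ∑ j ∈ Finset.range d,
          (aE v r x j + aE v r (x+1) j
            + (bE v r x j + (if 1 ≤ j then bE v r x (j-1) else 0))) = 0 :=
        Finset.sum_eq_zero fun j hj =>
          kerX_cond v hv r (by omega) (Finset.mem_range.mp hj)
      rw [Finset.sum_add_distrib, Finset.sum_add_distrib, Finset.sum_add_distrib] at hsum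
      have e1 : ∑ j ∈ Finset.range d, bE v r x j = ∑ j ∈ Finset.range (d-1), bE v r x j := by
        rw [show Finset.range d = Finset.range ((d-1)+1) by
          rw [Nat.sub_add_cancel (by omega)], Finset.sum_range_succ]
        simp [bE]
      have e2 : ∑ j ∈ Finset.range d, (if 1 ≤ j then bE v r x (j-1) else 0)
          = ∑ j ∈ Finset.range (d-1), bE v r x j := by
        rw [show Finset.range d = Finset.range ((d-1)+1) by
          rw [Nat.sub_add_cancel (by omega)], Finset.sum_range_succ']
        simp
      rw [e1, e2, CharTwo.add_self_eq_zero, add_zero] at hsum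
      exact hsum


lemma memX_of_sZ_zero (hw : 2 ≤ w)
    (v : ((Fin h × Fin w) × Fin d) ⊕ ((Fin h × Fin (w-1)) × Fin (d-1)) → ZMod 2)
    (hv : (hgpZ (abMat w h) (repMat d)).mulVec v = 0)
    (hall : ∀ (r : Fin h) (j : ℕ), j < d → sZ v r j = 0) :
    v ∈ LinearMap.range (hgpX (abMat w h) (repMat d)).vecMulLinear := by
  set u : (Fin h × Fin (w-1)) × Fin d → ZMod 2 :=
    fun p => ∑ x ∈ Finset.range ((p.1.2 : ℕ)+1), aE v p.1.1 x (p.2 : ℕ) with hu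
  have huX : ∀ (r : Fin h) (c j : ℕ) (hc : c < w - 1) (hj : j < d),
      uXE u r c j = ∑ x ∈ Finset.range (c+1), aE v r x j := by
    intro r c j hc hj
    simp [uXE, hc, hj, hu]
  have huX0 : ∀ (r : Fin h) (c j : ℕ), ¬ c < w - 1 → uXE u r c j = 0 := by
    intro r c j hc
    simp [uXE, hc]
  refine ⟨u, ?_⟩
  have hvm : (hgpX (abMat w h) (repMat d)).vecMulLinear u
      = (hgpX (abMat w h) (repMat d)).vecMul u := rfl
  rw [hvm]
  funext p
  rcases p with ⟨⟨r,x⟩,j⟩ | ⟨⟨r,c⟩,j2⟩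
  · rw [vecMulX_apply_inl, ← aE_of v r x j]
    by_cases hx0 : (x:ℕ) = 0
    · rw [if_neg (by omega), add_zero, hx0, huX r 0 j (by omega) j.isLt]
      simp
    · rw [if_pos (by omega)]
      by_cases hx1 : (x:ℕ) < w - 1
      · rw [huX r x j hx1 j.isLt, huX r ((x:ℕ)-1) j (by omega) j.isLt,
          show (x:ℕ) - 1 + 1 = (x:ℕ) by omega, Finset.sum_range_succ]
        exact z2_cancel _ _
      · have hxw : (x:ℕ) = w - 1 := by omega
        rw [huX0 r x j hx1, huX r ((x:ℕ)-1) j (by omega) j.isLt, zero_add]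
        have hs := hall r j j.isLt
        unfold sZ at hs
        rw [show Finset.range w = Finset.range ((w-1)+1) by
          rw [Nat.sub_add_cancel (by omega)], Finset.sum_range_succ] at hs
        have := z2_eq_of_add_eq_zero hs
        rw [show (x:ℕ) - 1 + 1 = w - 1 by omega, this, hxw]
  · rw [vecMulX_apply_inr, ← bE_of v r c j2]
    have hj2d : (j2:ℕ) < d - 1 := j2.isLt
    rw [huX r c j2 c.isLt (by omega), huX r c ((j2:ℕ)+1) c.isLt (by omega),
      ← Finset.sum_add_distrib]
    have hcong : ∀ x ∈ Finset.range ((c:ℕ)+1),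
        aE v r x j2 + aE v r x ((j2:ℕ)+1)
          = bE v r x j2 + (if 1 ≤ x then bE v r (x-1) (j2:ℕ) else 0) := by
      intro x hx
      apply z2_eq_of_add_eq_zero
      have hk := kerZ_cond v hv r (x := x) (j2 := (j2:ℕ))
        (by have := Finset.mem_range.mp hx; omega) hj2d
      linear_combination hk
    rw [Finset.sum_congr rfl hcong, telescope (fun x => bE v r x (j2:ℕ)) (c:ℕ)]

lemma memZ_of_sX_zero (hd : 2 ≤ d)
    (v : ((Fin h × Fin w) × Fin d) ⊕ ((Fin h × Fin (w-1)) × Fin (d-1)) → ZMod 2)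
    (hv : (hgpX (abMat w h) (repMat d)).mulVec v = 0)
    (hall : ∀ (r : Fin h) (x : ℕ), x < w → sX v r x = 0) :
    v ∈ LinearMap.range (hgpZ (abMat w h) (repMat d)).vecMulLinear := by
  set u : (Fin h × Fin w) × Fin (d-1) → ZMod 2 :=
    fun p => ∑ j ∈ Finset.range ((p.2 : ℕ)+1), aE v p.1.1 (p.1.2 : ℕ) j with hu
  have huZ : ∀ (r : Fin h) (x j : ℕ) (hx : x < w) (hj : j < d - 1),
      uZE u r x j = ∑ j' ∈ Finset.range (j+1), aE v r x j' := by
    intro r x j hx hj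
    simp [uZE, hx, hj, hu]
  have huZ0 : ∀ (r : Fin h) (x j : ℕ), ¬ j < d - 1 → uZE u r x j = 0 := by
    intro r x j hj
    simp [uZE, hj]
  refine ⟨u, ?_⟩
  have hvm : (hgpZ (abMat w h) (repMat d)).vecMulLinear u
      = (hgpZ (abMat w h) (repMat d)).vecMul u := rfl
  rw [hvm]
  funext p
  rcases p with ⟨⟨r,x⟩,j⟩ | ⟨⟨r,c⟩,j2⟩
  · rw [vecMulZ_apply_inl, ← aE_of v r x j]
    by_cases hj0 : (j:ℕ) = 0
    · rw [if_neg (by omega), add_zero, hj0, huZ r x 0 x.isLt (by omega)]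
      simp
    · rw [if_pos (by omega)]
      by_cases hj1 : (j:ℕ) < d - 1
      · rw [huZ r x j x.isLt hj1, huZ r x ((j:ℕ)-1) x.isLt (by omega),
          show (j:ℕ) - 1 + 1 = (j:ℕ) by omega, Finset.sum_range_succ]
        exact z2_cancel _ _
      · have hjd : (j:ℕ) = d - 1 := by omega
        rw [huZ0 r x j hj1, huZ r x ((j:ℕ)-1) x.isLt (by omega), zero_add]
        have hs := hall r x x.isLt
        unfold sX at hs
        rw [show Finset.range d = Finset.range ((d-1)+1) by
          rw [Nat.sub_add_cancel (by omega)], Finset.sum_range_succ] at hs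
        have := z2_eq_of_add_eq_zero hs
        rw [show (j:ℕ) - 1 + 1 = d - 1 by omega, this, hjd]
  · rw [vecMulZ_apply_inr, ← bE_of v r c j2]
    have hcw : (c:ℕ) < w - 1 := c.isLt
    rw [huZ r c j2 (by omega) j2.isLt, huZ r ((c:ℕ)+1) j2 (by omega) j2.isLt,
      ← Finset.sum_add_distrib]
    have hcong : ∀ j ∈ Finset.range ((j2:ℕ)+1),
        aE v r c j + aE v r ((c:ℕ)+1) j
          = bE v r c j + (if 1 ≤ j then bE v r (c:ℕ) (j-1) else 0) := by
      intro j hj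
      apply z2_eq_of_add_eq_zero
      have hk := kerX_cond v hv r (c := (c:ℕ)) (j := j)
        hcw (by have := Finset.mem_range.mp hj; omega)
      linear_combination hk
    rw [Finset.sum_congr rfl hcong, telescope (fun j => bE v r (c:ℕ) j) (j2:ℕ)]


lemma wt_ge_d_of_cols
    (v : ((Fin h × Fin w) × Fin d) ⊕ ((Fin h × Fin (w-1)) × Fin (d-1)) → ZMod 2)
    (r : Fin h)
    (hcols : ∀ j : Fin d, ∃ x : Fin w, v (Sum.inl ((r,x), j)) ≠ 0) : d ≤ wt v := by
  choose g hg using hcols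
  have hinj : Set.InjOn (fun j : Fin d => (Sum.inl ((r, g j), j) :
      ((Fin h × Fin w) × Fin d) ⊕ ((Fin h × Fin (w-1)) × Fin (d-1))))
      (Finset.univ : Finset (Fin d)) := by
    intro j1 _ j2 _ hj
    simpa using congrArg (fun s => match s with
      | Sum.inl p => p.2
      | Sum.inr _ => j1) hj
  have hmaps : ∀ j ∈ (Finset.univ : Finset (Fin d)),
      (Sum.inl ((r, g j), j) :
        ((Fin h × Fin w) × Fin d) ⊕ ((Fin h × Fin (w-1)) × Fin (d-1)))
        ∈ Finset.univ.filter (fun i => v i ≠ 0) := by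
    intro j _
    simp [hg j]
  have := Finset.card_le_card_of_injOn _ hmaps hinj
  simpa [wt] using this

lemma wt_ge_w_of_rows
    (v : ((Fin h × Fin w) × Fin d) ⊕ ((Fin h × Fin (w-1)) × Fin (d-1)) → ZMod 2)
    (r : Fin h)
    (hrows : ∀ x : Fin w, ∃ j : Fin d, v (Sum.inl ((r,x), j)) ≠ 0) : w ≤ wt v := by
  choose g hg using hrows
  have hinj : Set.InjOn (fun x : Fin w => (Sum.inl ((r, x), g x) :
      ((Fin h × Fin w) × Fin d) ⊕ ((Fin h × Fin (w-1)) × Fin (d-1))))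
      (Finset.univ : Finset (Fin w)) := by
    intro x1 _ x2 _ hx
    simpa using congrArg (fun s => match s with
      | Sum.inl p => p.1.2
      | Sum.inr _ => x1) hx
  have hmaps : ∀ x ∈ (Finset.univ : Finset (Fin w)),
      (Sum.inl ((r, x), g x) :
        ((Fin h × Fin w) × Fin d) ⊕ ((Fin h × Fin (w-1)) × Fin (d-1)))
        ∈ Finset.univ.filter (fun i => v i ≠ 0) := by
    intro x _
    simp [hg x]
  have := Finset.card_le_card_of_injOn _ hmaps hinj
  simpa [wt] using this

lemma lbZ (hw : 2 ≤ w) (hd : 2 ≤ d)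
    (v : ((Fin h × Fin w) × Fin d) ⊕ ((Fin h × Fin (w-1)) × Fin (d-1)) → ZMod 2)
    (hv : (hgpZ (abMat w h) (repMat d)).mulVec v = 0)
    (hnr : v ∉ LinearMap.range (hgpX (abMat w h) (repMat d)).vecMulLinear) :
    d ≤ wt v := by
  by_cases hall : ∀ r : Fin h, sZ v r 0 = 0
  · exact absurd (memX_of_sZ_zero hw v hv
      (fun r j hj => (sZ_const hw v hv r hj).trans (hall r))) hnr
  · push_neg at hall
    obtain ⟨r, hr⟩ := hall
    apply wt_ge_d_of_cols v r
    intro j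
    have hsj : sZ v r (j:ℕ) ≠ 0 := by
      rw [sZ_const hw v hv r j.isLt]
      exact hr
    obtain ⟨x, hxmem, hxne⟩ := Finset.exists_ne_zero_of_sum_ne_zero hsj
    have hxw : x < w := Finset.mem_range.mp hxmem
    refine ⟨⟨x, hxw⟩, ?_⟩
    have : aE v r x (j:ℕ) = v (Sum.inl ((r, ⟨x, hxw⟩), j)) := by
      simp [aE, hxw, j.isLt]
    rwa [this] at hxne

lemma lbX (hw : 2 ≤ w) (hd : 2 ≤ d)
    (v : ((Fin h × Fin w) × Fin d) ⊕ ((Fin h × Fin (w-1)) × Fin (d-1)) → ZMod 2)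
    (hv : (hgpX (abMat w h) (repMat d)).mulVec v = 0)
    (hnr : v ∉ LinearMap.range (hgpZ (abMat w h) (repMat d)).vecMulLinear) :
    w ≤ wt v := by
  by_cases hall : ∀ r : Fin h, sX v r 0 = 0
  · exact absurd (memZ_of_sX_zero hd v hv
      (fun r x hx => (sX_const hd v hv r hx).trans (hall r))) hnr
  · push_neg at hall
    obtain ⟨r, hr⟩ := hall
    apply wt_ge_w_of_rows v r
    intro x
    have hsx : sX v r (x:ℕ) ≠ 0 := by
      rw [sX_const hd v hv r x.isLt]
      exact hr
    obtain ⟨j, hjmem, hjne⟩ := Finset.exists_ne_zero_of_sum_ne_zero hsx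
    have hjd : j < d := Finset.mem_range.mp hjmem
    refine ⟨⟨j, hjd⟩, ?_⟩
    have : aE v r (x:ℕ) j = v (Sum.inl ((r, x), ⟨j, hjd⟩)) := by
      simp [aE, hjd, x.isLt]
    rwa [this] at hjne


/-- a logical X representative: row `r0` of the grid, all of column 0 of the repetition block -/
def vX (w : ℕ) (d : ℕ) {h : ℕ} (r0 : Fin h) :
    ((Fin h × Fin w) × Fin d) ⊕ ((Fin h × Fin (w-1)) × Fin (d-1)) → ZMod 2 :=
  Sum.elim (fun p => if p.1.1 = r0 ∧ (p.1.2 : ℕ) = 0 then 1 else 0) (fun _ => 0)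

/-- a logical Z representative: row `r0` of the grid, all of row 0 of the repetition block -/
def vZ (w : ℕ) (d : ℕ) {h : ℕ} (r0 : Fin h) :
    ((Fin h × Fin w) × Fin d) ⊕ ((Fin h × Fin (w-1)) × Fin (d-1)) → ZMod 2 :=
  Sum.elim (fun p => if p.1.1 = r0 ∧ (p.2 : ℕ) = 0 then 1 else 0) (fun _ => 0)

lemma kerZ_vX (r0 : Fin h) : (hgpZ (abMat w h) (repMat d)).mulVec (vX w d r0) = 0 := by
  funext p
  obtain ⟨⟨r, x⟩, j2⟩ := p
  rw [mulVecZ_apply]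
  have hb : ∀ c j : ℕ, bE (vX w d r0) r c j = 0 := by
    intro c j
    unfold bE vX
    split <;> [skip; rfl]
    split <;> rfl
  have ha : ∀ j : ℕ, j < d → aE (vX w d r0) r (x:ℕ) j
      = (if r = r0 ∧ (x:ℕ) = 0 then 1 else 0) := by
    intro j hj
    simp [aE, vX, x.isLt, hj]
  rw [ha _ (by omega), ha _ (by omega), hb, hb, CharTwo.add_self_eq_zero]
  simp

lemma kerX_vZ (r0 : Fin h) : (hgpX (abMat w h) (repMat d)).mulVec (vZ w d r0) = 0 := by
  funext p
  obtain ⟨⟨r, c⟩, j⟩ := p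
  rw [mulVecX_apply]
  have hb : ∀ c' j' : ℕ, bE (vZ w d r0) r c' j' = 0 := by
    intro c' j'
    unfold bE vZ
    split <;> [skip; rfl]
    split <;> rfl
  have ha : ∀ x : ℕ, x < w → aE (vZ w d r0) r x (j:ℕ)
      = (if r = r0 ∧ (j:ℕ) = 0 then 1 else 0) := by
    intro x hx
    simp [aE, vZ, j.isLt, hx]
  rw [ha _ (by omega), ha _ (by omega), hb, hb, CharTwo.add_self_eq_zero]
  simp

lemma pair_vX_vZ (hw : 2 ≤ w) (hd : 2 ≤ d) (r0 : Fin h) :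
    vX w d r0 ⬝ᵥ vZ w d r0 = 1 := by
  rw [dotProduct, Fintype.sum_sum_type]
  have h2 : ∑ q : (Fin h × Fin (w-1)) × Fin (d-1),
      vX w d r0 (Sum.inr q) * vZ w d r0 (Sum.inr q) = 0 := by
    apply Finset.sum_eq_zero
    intro q _
    simp [vX, vZ]
  rw [h2, add_zero]
  rw [Fintype.sum_eq_single ((r0, (⟨0, by omega⟩ : Fin w)), (⟨0, by omega⟩ : Fin d))]
  · simp [vX, vZ]
  · intro p hp
    obtain ⟨⟨r, x⟩, j⟩ := p
    have : ¬(r = r0 ∧ (x:ℕ) = 0) ∨ ¬(r = r0 ∧ (j:ℕ) = 0) := by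
      by_contra hcon
      push_neg at hcon
      obtain ⟨⟨h1a, h1b⟩, ⟨_, h2b⟩⟩ := hcon
      apply hp
      simp only [Prod.mk.injEq]
      exact ⟨⟨h1a, Fin.ext h1b⟩, Fin.ext h2b⟩
    rcases this with hne | hne
    · simp [vX, hne]
    · simp [vZ, hne]

lemma wt_vX (hw : 2 ≤ w) (r0 : Fin h) : wt (vX w d r0) = d := by
  unfold wt
  have himg : Finset.univ.filter (fun i => vX w d r0 i ≠ 0)
      = (Finset.univ : Finset (Fin d)).image
          (fun j => Sum.inl ((r0, (⟨0, by omega⟩ : Fin w)), j)) := by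
    ext s
    rcases s with ⟨⟨r, x⟩, j⟩ | q
    · simp only [ne_eq, Finset.mem_filter, Finset.mem_univ, true_and,
        Finset.mem_image, Sum.inl.injEq, Prod.mk.injEq]
      simp only [vX, Sum.elim_inl]
      constructor
      · intro hne
        have hcond : r = r0 ∧ (x:ℕ) = 0 := by
          by_contra hc
          rw [if_neg hc] at hne
          exact hne rfl
        exact ⟨j, ⟨⟨hcond.1.symm, Fin.ext (by simp [hcond.2])⟩, rfl⟩⟩
      · rintro ⟨j', ⟨⟨hr, hx⟩, hj⟩⟩
        rw [if_pos ⟨hr.symm, by simp [← hx]⟩]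
        simp
    · simp only [Finset.mem_filter]
      simp [vX]
  rw [himg, Finset.card_image_of_injective _ (fun a b hab => by simpa using hab)]
  simp

lemma wt_vZ (hd : 2 ≤ d) (r0 : Fin h) : wt (vZ w d r0) = w := by
  unfold wt
  have himg : Finset.univ.filter (fun i => vZ w d r0 i ≠ 0)
      = (Finset.univ : Finset (Fin w)).image
          (fun x => Sum.inl ((r0, x), (⟨0, by omega⟩ : Fin d))) := by
    ext s
    rcases s with ⟨⟨r, x⟩, j⟩ | q
    · simp only [ne_eq, Finset.mem_filter, Finset.mem_univ, true_and,
        Finset.mem_image, Sum.inl.injEq, Prod.mk.injEq]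
      simp only [vZ, Sum.elim_inl]
      constructor
      · intro hne
        have hcond : r = r0 ∧ (j:ℕ) = 0 := by
          by_contra hc
          rw [if_neg hc] at hne
          exact hne rfl
        exact ⟨x, ⟨⟨hcond.1.symm, rfl⟩, Fin.ext (by simp [hcond.2])⟩⟩
      · rintro ⟨x', ⟨⟨hr, hx⟩, hj⟩⟩
        rw [if_pos ⟨hr.symm, by simp [← hj]⟩]
        simp
    · simp only [Finset.mem_filter]
      simp [vZ]
  rw [himg, Finset.card_image_of_injective _ (fun a b hab => by simpa using hab)]
  simp

end Ext

end AbRepAux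

/-- The CSS code distance of the hypergraph product of the "ab"-pattern code `abMat w h`
with the repetition code `R_d` is `min(w, d)`, where
`d_X = min{ wt v : H_Z v = 0, v ∉ rowspace(H_X) }` and
`d_Z = min{ wt v : H_X v = 0, v ∉ rowspace(H_Z) }`. -/
theorem ab_rep_hgp_distance (w h d : ℕ) (hw : 2 ≤ w) (hh : 1 ≤ h) (hd : 2 ≤ d) :
    min
      (sInf {m : ℕ | ∃ v, (hgpZ (abMat w h) (repMat d)).mulVec v = 0 ∧
        v ∉ LinearMap.range (hgpX (abMat w h) (repMat d)).vecMulLinear ∧ wt v = m})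
      (sInf {m : ℕ | ∃ v, (hgpX (abMat w h) (repMat d)).mulVec v = 0 ∧
        v ∉ LinearMap.range (hgpZ (abMat w h) (repMat d)).vecMulLinear ∧ wt v = m})
    = min w d := by
  classical
  set r0 : Fin h := ⟨0, hh⟩ with hr0
  have hkerZ := AbRepAux.kerZ_vX (w := w) (d := d) r0
  have hkerX := AbRepAux.kerX_vZ (w := w) (d := d) r0
  have hpair := AbRepAux.pair_vX_vZ hw hd r0
  have hpair' : AbRepAux.vZ w d r0 ⬝ᵥ AbRepAux.vX w d r0 = 1 := by
    rw [dotProduct_comm]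
    exact hpair
  have hnx : AbRepAux.vX w d r0
      ∉ LinearMap.range (hgpX (abMat w h) (repMat d)).vecMulLinear :=
    AbRepAux.not_mem_range_of_pairing _ (AbRepAux.vZ w d r0) _ hkerX hpair
  have hnz : AbRepAux.vZ w d r0
      ∉ LinearMap.range (hgpZ (abMat w h) (repMat d)).vecMulLinear :=
    AbRepAux.not_mem_range_of_pairing _ (AbRepAux.vX w d r0) _ hkerZ hpair'
  have mem1 : d ∈ {m : ℕ | ∃ v, (hgpZ (abMat w h) (repMat d)).mulVec v = 0 ∧
      v ∉ LinearMap.range (hgpX (abMat w h) (repMat d)).vecMulLinear ∧ wt v = m} :=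
    ⟨AbRepAux.vX w d r0, hkerZ, hnx, AbRepAux.wt_vX hw r0⟩
  have mem2 : w ∈ {m : ℕ | ∃ v, (hgpX (abMat w h) (repMat d)).mulVec v = 0 ∧
      v ∉ LinearMap.range (hgpZ (abMat w h) (repMat d)).vecMulLinear ∧ wt v = m} :=
    ⟨AbRepAux.vZ w d r0, hkerX, hnz, AbRepAux.wt_vZ hd r0⟩
  have h1 : sInf {m : ℕ | ∃ v, (hgpZ (abMat w h) (repMat d)).mulVec v = 0 ∧
      v ∉ LinearMap.range (hgpX (abMat w h) (repMat d)).vecMulLinear ∧ wt v = m} = d := by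
    refine le_antisymm (Nat.sInf_le mem1) (le_csInf ⟨d, mem1⟩ ?_)
    rintro m ⟨v, hv, hnr, rfl⟩
    exact AbRepAux.lbZ hw hd v hv hnr
  have h2 : sInf {m : ℕ | ∃ v, (hgpX (abMat w h) (repMat d)).mulVec v = 0 ∧
      v ∉ LinearMap.range (hgpZ (abMat w h) (repMat d)).vecMulLinear ∧ wt v = m} = w := by
    refine le_antisymm (Nat.sInf_le mem2) (le_csInf ⟨w, mem2⟩ ?_)
    rintro m ⟨v, hv, hnr, rfl⟩
    exact AbRepAux.lbX hw hd v hv hnr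
  rw [h1, h2, min_comm]
end

section
/- Fix integers w ≥ 2 and d ≥ 2, and let R_w and R_d be the (w−1) × w and (d−1) × d repetition check matrices over 𝔽₂. Form the hypergraph product check matrices H_X = [R_w ⊗ I_d | I_{w−1} ⊗ R_dᵀ] and H_Z = [I_w ⊗ R_d | R_wᵀ ⊗ I_{d−1}]. Then the resulting CSS code is the (w × d) surface code with parameters [[wd + (w−1)(d−1), 1, min(w,d)]]: its number of physical qubits is wd + (w−1)(d−1), its number of logical qubits (wd + (w−1)(d−1)) − rank(H_X) − rank(H_Z) equals 1, and its CSS code distance min(d_X, d_Z) equals min(w, d). -/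
open Matrix
open scoped Kronecker

namespace SurfaceAux

open Finset

abbrev F := ZMod 2
abbrev Q (w d : ℕ) := (Fin w × Fin d) ⊕ (Fin (w-1) × Fin (d-1))

/-! ### Indicator sums -/

lemma sum_ite_coe {m : ℕ} (g : Fin m → F) (c : ℕ) (hc : c < m) :
    ∑ i : Fin m, (if (i:ℕ) = c then g i else 0) = g ⟨c, hc⟩ := by
  rw [Finset.sum_eq_single (⟨c, hc⟩ : Fin m)]
  · simp
  · intro b _ hb
    rw [if_neg]
    simpa [Fin.ext_iff] using hb
  · simp

/-! ### Repetition matrix facts -/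

lemma rep_apply (d : ℕ) (i : Fin (d-1)) (j : Fin d) :
    repMat d i j = (if (j:ℕ) = (i:ℕ) then 1 else 0) + (if (j:ℕ) = (i:ℕ)+1 then 1 else 0) := by
  simp only [repMat, Matrix.of_apply]
  split_ifs with h h1 h2 <;> simp_all

lemma rep_row_sum (d : ℕ) (i : Fin (d-1)) : ∑ j, repMat d i j = 0 := by
  have h1 : (i:ℕ) < d := by omega
  have h2 : (i:ℕ)+1 < d := by have := i.isLt; omega
  simp only [rep_apply, Finset.sum_add_distrib,
    sum_ite_coe (fun _ => (1:F)) _ h1, sum_ite_coe (fun _ => (1:F)) _ h2]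
  decide

lemma rep_dot {d : ℕ} (i : Fin (d-1)) (g : Fin d → F) :
    ∑ j, repMat d i j * g j
      = g ⟨i, by omega⟩ + g ⟨(i:ℕ)+1, by have := i.isLt; omega⟩ := by
  simp only [rep_apply, add_mul, ite_mul, one_mul, zero_mul, Finset.sum_add_distrib,
    sum_ite_coe g _ (by omega : (i:ℕ) < d),
    sum_ite_coe g _ (by have := i.isLt; omega : (i:ℕ)+1 < d)]

lemma rep_vecMul_eq_zero {d : ℕ} {u : Fin (d-1) → F} (h : u ᵥ* repMat d = 0) : u = 0 := by
  suffices H : ∀ n (hn : n < d - 1), u ⟨n, hn⟩ = 0 by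
    funext i; exact H i i.isLt
  intro n
  induction n using Nat.strong_induction_on with
  | _ n ih =>
    intro hn
    have hnd : n < d := by omega
    have hcol := congrFun h (⟨n, hnd⟩ : Fin d)
    have hexp : (u ᵥ* repMat d) (⟨n, hnd⟩ : Fin d)
        = (∑ i : Fin (d-1), if (i:ℕ) = n then u i else 0)
          + ∑ i : Fin (d-1), if (i:ℕ) + 1 = n then u i else 0 := by
      simp only [Matrix.vecMul, dotProduct, rep_apply]
      simp only [mul_add, mul_ite, mul_one, mul_zero, Finset.sum_add_distrib]
      congr 1
      · apply Finset.sum_congr rfl; intro i _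
        by_cases hi : (n:ℕ) = (i:ℕ) <;> simp [hi, eq_comm]
      · apply Finset.sum_congr rfl; intro i _
        by_cases hi : (n:ℕ) = (i:ℕ)+1 <;> simp [hi, eq_comm]
    rw [hexp, sum_ite_coe u n hn] at hcol
    rcases Nat.eq_zero_or_pos n with h0 | hpos
    · subst h0
      have : (∑ i : Fin (d-1), if (i:ℕ) + 1 = 0 then u i else 0) = 0 := by
        apply Finset.sum_eq_zero; intro i _; simp
      rw [this] at hcol
      simpa using hcol
    · have heq : (∑ i : Fin (d-1), if (i:ℕ) + 1 = n then u i else 0)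
          = ∑ i : Fin (d-1), if (i:ℕ) = n - 1 then u i else 0 := by
        apply Finset.sum_congr rfl; intro i _
        have : ((i:ℕ) + 1 = n) ↔ ((i:ℕ) = n - 1) := by omega
        simp [this]
      rw [heq, sum_ite_coe u (n-1) (by omega)] at hcol
      rw [ih (n-1) (by omega) (by omega)] at hcol
      simpa using hcol

variable {w d : ℕ}

/-! ### mulVec and vecMul formulas for the HGP matrices -/

lemma HX_mulVec (v : Q w d → F) (p : Fin (w-1) × Fin d) :
    (hgpX (repMat w) (repMat d) *ᵥ v) p
      = (∑ i, repMat w p.1 i * v (Sum.inl (i, p.2)))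
        + ∑ j, repMat d j p.2 * v (Sum.inr (p.1, j)) := by
  obtain ⟨i', b⟩ := p
  simp [hgpX, Matrix.mulVec, dotProduct, Fintype.sum_sum_type, fromCols,
    Fintype.sum_prod_type, Matrix.one_apply, ite_mul, mul_ite, mul_one, mul_zero, zero_mul,
    Finset.sum_ite_eq, Finset.sum_ite_irrel, Finset.sum_const_zero]

lemma HZ_mulVec (v : Q w d → F) (p : Fin w × Fin (d-1)) :
    (hgpZ (repMat w) (repMat d) *ᵥ v) p
      = (∑ a, repMat d p.2 a * v (Sum.inl (p.1, a)))
        + ∑ i, repMat w i p.1 * v (Sum.inr (i, p.2)) := by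
  obtain ⟨i, a'⟩ := p
  simp [hgpZ, Matrix.mulVec, dotProduct, Fintype.sum_sum_type, fromCols,
    Fintype.sum_prod_type, Matrix.one_apply, ite_mul, mul_ite, mul_one, mul_zero, zero_mul,
    Finset.sum_ite_eq, Finset.sum_ite_irrel, Finset.sum_const_zero]

lemma HX_vecMul_inl (x : Fin (w-1) × Fin d → F) (i : Fin w) (a : Fin d) :
    (x ᵥ* hgpX (repMat w) (repMat d)) (Sum.inl (i, a))
      = ∑ i', x (i', a) * repMat w i' i := by
  simp [hgpX, Matrix.vecMul, dotProduct, fromCols, Fintype.sum_prod_type,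
    Matrix.one_apply, ite_mul, mul_ite, mul_one, mul_zero, zero_mul,
    Finset.sum_ite_eq, Finset.sum_ite_irrel, Finset.sum_const_zero]

lemma HZ_vecMul_inl (y : Fin w × Fin (d-1) → F) (i : Fin w) (a : Fin d) :
    (y ᵥ* hgpZ (repMat w) (repMat d)) (Sum.inl (i, a))
      = ∑ a', y (i, a') * repMat d a' a := by
  simp [hgpZ, Matrix.vecMul, dotProduct, fromCols, Fintype.sum_prod_type,
    Matrix.one_apply, ite_mul, mul_ite, mul_one, mul_zero, zero_mul,
    Finset.sum_ite_eq, Finset.sum_ite_irrel, Finset.sum_const_zero]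

/-! ### CSS orthogonality -/

lemma HX_mul_HZ_transpose :
    hgpX (repMat w) (repMat d) * (hgpZ (repMat w) (repMat d))ᵀ = 0 := by
  rw [hgpX, hgpZ, transpose_fromCols, fromCols_mul_fromRows,
    ← kroneckerMap_transpose, ← kroneckerMap_transpose]
  simp only [Matrix.transpose_one, Matrix.transpose_transpose]
  rw [← mul_kronecker_mul, ← mul_kronecker_mul, Matrix.mul_one, Matrix.one_mul,
    Matrix.one_mul, Matrix.mul_one]
  ext i j
  simp only [Matrix.add_apply, Matrix.zero_apply]
  exact CharTwo.add_self_eq_zero _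

lemma HZ_mul_HX_transpose :
    hgpZ (repMat w) (repMat d) * (hgpX (repMat w) (repMat d))ᵀ = 0 := by
  have := congrArg Matrix.transpose (HX_mul_HZ_transpose (w := w) (d := d))
  simpa [Matrix.transpose_mul] using this

lemma range_HZ_le_ker_HX :
    LinearMap.range (hgpZ (repMat w) (repMat d)).vecMulLinear
      ≤ LinearMap.ker (hgpX (repMat w) (repMat d)).mulVecLin := by
  rintro x ⟨y, rfl⟩
  rw [LinearMap.mem_ker, Matrix.mulVecLin_apply, Matrix.vecMulLinear_apply,
    ← Matrix.mulVec_transpose, Matrix.mulVec_mulVec, HX_mul_HZ_transpose]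
  simp

lemma range_HX_le_ker_HZ :
    LinearMap.range (hgpX (repMat w) (repMat d)).vecMulLinear
      ≤ LinearMap.ker (hgpZ (repMat w) (repMat d)).mulVecLin := by
  rintro x ⟨y, rfl⟩
  rw [LinearMap.mem_ker, Matrix.mulVecLin_apply, Matrix.vecMulLinear_apply,
    ← Matrix.mulVec_transpose, Matrix.mulVec_mulVec, HZ_mul_HX_transpose]
  simp

/-! ### Ranks -/

lemma kron_one_vecMul (v : Fin (w-1) × Fin d → F) (p : Fin w × Fin d) :
    (v ᵥ* (repMat w ⊗ₖ (1 : Matrix (Fin d) (Fin d) F))) p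
      = ((fun i => v (i, p.2)) ᵥ* repMat w) p.1 := by
  obtain ⟨j, b⟩ := p
  simp [Matrix.vecMul, dotProduct, Fintype.sum_prod_type, Matrix.one_apply,
    ite_mul, mul_ite, mul_one, mul_zero, zero_mul,
    Finset.sum_ite_eq, Finset.sum_ite_irrel, Finset.sum_const_zero]

lemma one_kron_vecMul (v : Fin w × Fin (d-1) → F) (p : Fin w × Fin d) :
    (v ᵥ* ((1 : Matrix (Fin w) (Fin w) F) ⊗ₖ repMat d)) p
      = ((fun a => v (p.1, a)) ᵥ* repMat d) p.2 := by
  obtain ⟨j, b⟩ := p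
  simp [Matrix.vecMul, dotProduct, Fintype.sum_prod_type, Matrix.one_apply,
    ite_mul, mul_ite, mul_one, mul_zero, zero_mul,
    Finset.sum_ite_eq, Finset.sum_ite_irrel, Finset.sum_const_zero]

lemma rank_of_vecMul_inj {p q : Type*} [Fintype p] [Fintype q] (M : Matrix p q F)
    (h : Function.Injective M.vecMulLinear) : M.rank = Fintype.card p := by
  rw [← Matrix.rank_transpose, Matrix.rank]
  rw [Matrix.mulVecLin_transpose, LinearMap.finrank_range_of_inj h,
    Module.finrank_fintype_fun_eq_card]

lemma rank_fromColumns_left {p q r : Type*} [Fintype p] [Fintype q] [Fintype r]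
    (A : Matrix p q F) (B : Matrix p r F) : A.rank ≤ (fromCols A B).rank := by
  apply Submodule.finrank_mono
  rintro x ⟨v, rfl⟩
  refine ⟨Sum.elim v 0, ?_⟩
  rw [Matrix.mulVecLin_apply, Matrix.fromCols_mulVec_sumElim]
  simp

lemma rank_HX : (hgpX (repMat w) (repMat d)).rank = (w-1)*d := by
  apply le_antisymm
  · simpa using (hgpX (repMat w) (repMat d)).rank_le_card_height
  · have h1 : (repMat w ⊗ₖ (1 : Matrix (Fin d) (Fin d) F)).rank = (w-1)*d := by
      rw [rank_of_vecMul_inj]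
      · simp
      · rw [← LinearMap.ker_eq_bot, LinearMap.ker_eq_bot']
        intro v hv
        have h2 : ∀ b : Fin d, (fun i => v (i, b)) = 0 := by
          intro b
          apply rep_vecMul_eq_zero (d := w)
          funext j
          have := congrFun hv (j, b)
          rw [Matrix.vecMulLinear_apply, kron_one_vecMul] at this
          simpa using this
        funext p
        exact congrFun (h2 p.2) p.1
    calc (w-1)*d = (repMat w ⊗ₖ (1 : Matrix (Fin d) (Fin d) F)).rank := h1.symm
    _ ≤ _ := rank_fromColumns_left _ _

lemma rank_HZ : (hgpZ (repMat w) (repMat d)).rank = w*(d-1) := by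
  apply le_antisymm
  · simpa using (hgpZ (repMat w) (repMat d)).rank_le_card_height
  · have h1 : ((1 : Matrix (Fin w) (Fin w) F) ⊗ₖ repMat d).rank = w*(d-1) := by
      rw [rank_of_vecMul_inj]
      · simp
      · rw [← LinearMap.ker_eq_bot, LinearMap.ker_eq_bot']
        intro v hv
        have h2 : ∀ i : Fin w, (fun a => v (i, a)) = 0 := by
          intro i
          apply rep_vecMul_eq_zero (d := d)
          funext b
          have := congrFun hv (i, b)
          rw [Matrix.vecMulLinear_apply, one_kron_vecMul] at this
          simpa using this
        funext p
        exact congrFun (h2 p.1) p.2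
    calc w*(d-1) = ((1 : Matrix (Fin w) (Fin w) F) ⊗ₖ repMat d).rank := h1.symm
    _ ≤ _ := rank_fromColumns_left _ _


/-! ### Functionals -/

/-- Sum of the entries of `v` on row `i` of the first block. -/
def phiZ (i : Fin w) : (Q w d → F) →ₗ[F] F where
  toFun v := ∑ a, v (Sum.inl (i, a))
  map_add' u v := by simp [Finset.sum_add_distrib]
  map_smul' c v := by simp [Finset.mul_sum]

/-- Sum of the entries of `v` on column `a` of the first block. -/
def psiX (a : Fin d) : (Q w d → F) →ₗ[F] F where
  toFun v := ∑ i, v (Sum.inl (i, a))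
  map_add' u v := by simp [Finset.sum_add_distrib]
  map_smul' c v := by simp [Finset.mul_sum]

lemma phiZ_apply (i : Fin w) (v : Q w d → F) : phiZ i v = ∑ a, v (Sum.inl (i, a)) := rfl

lemma psiX_apply (a : Fin d) (v : Q w d → F) : psiX a v = ∑ i, v (Sum.inl (i, a)) := rfl

lemma phiZ_vanish (i : Fin w) (y : Fin w × Fin (d-1) → F) :
    phiZ i (y ᵥ* hgpZ (repMat w) (repMat d)) = 0 := by
  simp only [phiZ_apply, HZ_vecMul_inl]
  rw [Finset.sum_comm]
  apply Finset.sum_eq_zero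
  intro a' _
  rw [← Finset.mul_sum, rep_row_sum, mul_zero]

lemma psiX_vanish (a : Fin d) (x : Fin (w-1) × Fin d → F) :
    psiX a (x ᵥ* hgpX (repMat w) (repMat d)) = 0 := by
  simp only [psiX_apply, HX_vecMul_inl]
  rw [Finset.sum_comm]
  apply Finset.sum_eq_zero
  intro i' _
  rw [← Finset.mul_sum, rep_row_sum, mul_zero]

lemma eq_of_add_eq_zero {a b : F} (h : a + b = 0) : a = b := by
  rw [add_eq_zero_iff_eq_neg] at h
  rw [h, CharTwo.neg_eq]

lemma phiZ_step {v : Q w d → F} (hv : hgpX (repMat w) (repMat d) *ᵥ v = 0) (i' : Fin (w-1)) :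
    phiZ ⟨(i' : ℕ), by omega⟩ v = phiZ ⟨(i' : ℕ)+1, by have := i'.isLt; omega⟩ v := by
  have h0 : ∑ b, (hgpX (repMat w) (repMat d) *ᵥ v) (i', b) = 0 := by rw [hv]; simp
  simp only [HX_mulVec] at h0
  rw [Finset.sum_add_distrib] at h0
  have h1 : ∑ b, ∑ i, repMat w i' i * v (Sum.inl (i, b))
      = phiZ (⟨(i' : ℕ), by omega⟩ : Fin w) v
        + phiZ (⟨(i' : ℕ)+1, by have := i'.isLt; omega⟩ : Fin w) v := by
    rw [Finset.sum_comm]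
    have hmul : ∀ i : Fin w, ∑ b, repMat w i' i * v (Sum.inl (i, b))
        = repMat w i' i * ∑ b, v (Sum.inl (i, b)) := fun i => (Finset.mul_sum _ _ _).symm
    simp_rw [hmul]
    rw [rep_dot (i := i') (g := fun i => ∑ b, v (Sum.inl (i, b)))]
    rfl
  have h2 : ∑ b, ∑ j, repMat d j b * v (Sum.inr (i', j)) = 0 := by
    rw [Finset.sum_comm]
    apply Finset.sum_eq_zero
    intro j _
    rw [← Finset.sum_mul, rep_row_sum, zero_mul]
  rw [h1, h2, add_zero] at h0
  exact eq_of_add_eq_zero h0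

lemma psiX_step {v : Q w d → F} (hv : hgpZ (repMat w) (repMat d) *ᵥ v = 0) (a' : Fin (d-1)) :
    psiX ⟨(a' : ℕ), by omega⟩ v = psiX ⟨(a' : ℕ)+1, by have := a'.isLt; omega⟩ v := by
  have h0 : ∑ i, (hgpZ (repMat w) (repMat d) *ᵥ v) (i, a') = 0 := by rw [hv]; simp
  simp only [HZ_mulVec] at h0
  rw [Finset.sum_add_distrib] at h0
  have h1 : ∑ i, ∑ a, repMat d a' a * v (Sum.inl (i, a))
      = psiX (⟨(a' : ℕ), by omega⟩ : Fin d) v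
        + psiX (⟨(a' : ℕ)+1, by have := a'.isLt; omega⟩ : Fin d) v := by
    have hdot : ∀ i : Fin w, ∑ a, repMat d a' a * v (Sum.inl (i, a))
        = v (Sum.inl (i, ⟨(a' : ℕ), by omega⟩))
          + v (Sum.inl (i, ⟨(a' : ℕ)+1, by have := a'.isLt; omega⟩)) := by
      intro i
      exact rep_dot (i := a') (g := fun a => v (Sum.inl (i, a)))
    simp_rw [hdot]
    rw [Finset.sum_add_distrib]
    rfl
  have h2 : ∑ i, ∑ i'', repMat w i'' i * v (Sum.inr (i'', a')) = 0 := by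
    rw [Finset.sum_comm]
    apply Finset.sum_eq_zero
    intro i'' _
    rw [← Finset.sum_mul, rep_row_sum, zero_mul]
  rw [h1, h2, add_zero] at h0
  exact eq_of_add_eq_zero h0

lemma phiZ_const {v : Q w d → F} (hv : hgpX (repMat w) (repMat d) *ᵥ v = 0)
    (hw : 1 ≤ w) (i : Fin w) : phiZ i v = phiZ ⟨0, by omega⟩ v := by
  suffices H : ∀ n (hn : n < w), phiZ ⟨n, hn⟩ v = phiZ ⟨0, by omega⟩ v by
    have := H i i.isLt
    simpa using this
  intro n
  induction n with
  | zero => intro hn; rfl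
  | succ k ih =>
    intro hn
    have hk : k < w - 1 := by omega
    have := phiZ_step hv ⟨k, hk⟩
    simp only at this
    rw [← this]
    exact ih (by omega)

lemma psiX_const {v : Q w d → F} (hv : hgpZ (repMat w) (repMat d) *ᵥ v = 0)
    (hd : 1 ≤ d) (a : Fin d) : psiX a v = psiX ⟨0, by omega⟩ v := by
  suffices H : ∀ n (hn : n < d), psiX ⟨n, hn⟩ v = psiX ⟨0, by omega⟩ v by
    have := H a a.isLt
    simpa using this
  intro n
  induction n with
  | zero => intro hn; rfl
  | succ k ih =>
    intro hn
    have hk : k < d - 1 := by omega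
    have := psiX_step hv ⟨k, hk⟩
    simp only at this
    rw [← this]
    exact ih (by omega)

/-! ### Dimension counting -/

lemma mem_of_ker_of_functional {V : Type*} [AddCommGroup V] [Module F V] [FiniteDimensional F V]
    (R K : Submodule F V) (φ : V →ₗ[F] F) (hRK : R ≤ K) (hRφ : ∀ x ∈ R, φ x = 0)
    (x0 : V) (hx0K : x0 ∈ K) (hx0φ : φ x0 ≠ 0)
    (hdim : Module.finrank F K = Module.finrank F R + 1)
    {v : V} (hvK : v ∈ K) (hvφ : φ v = 0) : v ∈ R := by
  have hle : R ≤ K ⊓ LinearMap.ker φ :=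
    le_inf hRK (fun x hx => LinearMap.mem_ker.mpr (hRφ x hx))
  have hlt : K ⊓ LinearMap.ker φ < K := by
    refine lt_of_le_of_ne inf_le_left ?_
    intro h
    have hx0 : x0 ∈ K ⊓ LinearMap.ker φ := by rw [h]; exact hx0K
    exact hx0φ hx0.2
  have hfr : Module.finrank F ↥(K ⊓ LinearMap.ker φ) < Module.finrank F K :=
    Submodule.finrank_lt_finrank_of_lt hlt
  have heq : R = K ⊓ LinearMap.ker φ :=
    Submodule.eq_of_le_of_finrank_le hle (by omega)
  rw [heq]
  exact ⟨hvK, LinearMap.mem_ker.mpr hvφ⟩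

lemma finrank_ker_HX (hw : 2 ≤ w) (hd : 2 ≤ d) :
    Module.finrank F (LinearMap.ker (hgpX (repMat w) (repMat d)).mulVecLin)
      = w*(d-1) + 1 := by
  have h := LinearMap.finrank_range_add_finrank_ker (hgpX (repMat w) (repMat d)).mulVecLin
  rw [Module.finrank_fintype_fun_eq_card] at h
  rw [show Module.finrank F ↥(LinearMap.range (hgpX (repMat w) (repMat d)).mulVecLin)
      = (hgpX (repMat w) (repMat d)).rank from rfl, rank_HX] at h
  have hcard : Fintype.card (Q w d) = w*d + (w-1)*(d-1) := by simp
  rw [hcard] at h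
  obtain ⟨W, rfl⟩ : ∃ W, w = W + 1 := ⟨w - 1, by omega⟩
  obtain ⟨D, rfl⟩ : ∃ D, d = D + 1 := ⟨d - 1, by omega⟩
  simp only [Nat.add_sub_cancel] at h ⊢
  have hr : (W+1) * (D+1) + W * D = W * (D+1) + ((W+1) * D + 1) := by ring
  rw [hr] at h
  exact Nat.add_left_cancel h

lemma finrank_ker_HZ (hw : 2 ≤ w) (hd : 2 ≤ d) :
    Module.finrank F (LinearMap.ker (hgpZ (repMat w) (repMat d)).mulVecLin)
      = (w-1)*d + 1 := by
  have h := LinearMap.finrank_range_add_finrank_ker (hgpZ (repMat w) (repMat d)).mulVecLin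
  rw [Module.finrank_fintype_fun_eq_card] at h
  rw [show Module.finrank F ↥(LinearMap.range (hgpZ (repMat w) (repMat d)).mulVecLin)
      = (hgpZ (repMat w) (repMat d)).rank from rfl, rank_HZ] at h
  have hcard : Fintype.card (Q w d) = w*d + (w-1)*(d-1) := by simp
  rw [hcard] at h
  obtain ⟨W, rfl⟩ : ∃ W, w = W + 1 := ⟨w - 1, by omega⟩
  obtain ⟨D, rfl⟩ : ∃ D, d = D + 1 := ⟨d - 1, by omega⟩
  simp only [Nat.add_sub_cancel] at h ⊢
  have hr : (W+1) * (D+1) + W * D = (W+1) * D + (W * (D+1) + 1) := by ring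
  rw [hr] at h
  exact Nat.add_left_cancel h

lemma finrank_range_vecMul_HZ :
    Module.finrank F (LinearMap.range (hgpZ (repMat w) (repMat d)).vecMulLinear)
      = w*(d-1) := by
  rw [← Matrix.mulVecLin_transpose]
  rw [show Module.finrank F ↥(LinearMap.range (hgpZ (repMat w) (repMat d))ᵀ.mulVecLin)
      = (hgpZ (repMat w) (repMat d))ᵀ.rank from rfl]
  rw [Matrix.rank_transpose, rank_HZ]

lemma finrank_range_vecMul_HX :
    Module.finrank F (LinearMap.range (hgpX (repMat w) (repMat d)).vecMulLinear)
      = (w-1)*d := by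
  rw [← Matrix.mulVecLin_transpose]
  rw [show Module.finrank F ↥(LinearMap.range (hgpX (repMat w) (repMat d))ᵀ.mulVecLin)
      = (hgpX (repMat w) (repMat d))ᵀ.rank from rfl]
  rw [Matrix.rank_transpose, rank_HX]

/-! ### The logical operators -/

/-- The vertical string of weight `w` supported on column `z` of the first block. -/
def vZvec (w : ℕ) (z : Fin d) : Q w d → F :=
  Sum.elim (fun p => if p.2 = z then 1 else 0) 0

/-- The horizontal string of weight `d` supported on row `t` of the first block. -/
def vXvec (d : ℕ) (t : Fin w) : Q w d → F :=
  Sum.elim (fun p => if p.1 = t then 1 else 0) 0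

lemma HX_mulVec_vZ (z : Fin d) : hgpX (repMat w) (repMat d) *ᵥ vZvec w z = 0 := by
  funext p
  rw [HX_mulVec]
  obtain ⟨i', b⟩ := p
  simp only [vZvec, Sum.elim_inl, Sum.elim_inr, Pi.zero_apply, mul_zero,
    Finset.sum_const_zero, add_zero]
  by_cases hb : b = z
  · calc ∑ i, repMat w i' i * (if b = z then (1:F) else 0) = ∑ i, repMat w i' i := by
          apply Finset.sum_congr rfl; intro i _; rw [if_pos hb, mul_one]
    _ = 0 := rep_row_sum w i'
  · simp [hb]

lemma HZ_mulVec_vX (t : Fin w) : hgpZ (repMat w) (repMat d) *ᵥ vXvec d t = 0 := by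
  funext p
  rw [HZ_mulVec]
  obtain ⟨i, a'⟩ := p
  simp only [vXvec, Sum.elim_inl, Sum.elim_inr, Pi.zero_apply, mul_zero,
    Finset.sum_const_zero, add_zero]
  by_cases hi : i = t
  · calc ∑ a, repMat d a' a * (if i = t then (1:F) else 0) = ∑ a, repMat d a' a := by
          apply Finset.sum_congr rfl; intro a _; rw [if_pos hi, mul_one]
    _ = 0 := rep_row_sum d a'
  · simp [hi]

lemma phiZ_vZ (i : Fin w) (z : Fin d) : phiZ i (vZvec w z) = 1 := by
  simp [phiZ_apply, vZvec]

lemma psiX_vX (a : Fin d) (t : Fin w) : psiX a (vXvec d t) = 1 := by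
  simp [psiX_apply, vXvec]

lemma vZ_not_mem (z : Fin d) (hw : 1 ≤ w) :
    vZvec w z ∉ LinearMap.range (hgpZ (repMat w) (repMat d)).vecMulLinear := by
  rintro ⟨y, hy⟩
  have h1 : phiZ (⟨0, by omega⟩ : Fin w) (vZvec w z) = 0 := by
    rw [← hy]
    rw [Matrix.vecMulLinear_apply]
    exact phiZ_vanish _ y
  rw [phiZ_vZ] at h1
  exact one_ne_zero h1

lemma vX_not_mem (t : Fin w) (hd : 1 ≤ d) :
    vXvec d t ∉ LinearMap.range (hgpX (repMat w) (repMat d)).vecMulLinear := by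
  rintro ⟨x, hx⟩
  have h1 : psiX (⟨0, by omega⟩ : Fin d) (vXvec d t) = 0 := by
    rw [← hx]
    rw [Matrix.vecMulLinear_apply]
    exact psiX_vanish _ x
  rw [psiX_vX] at h1
  exact one_ne_zero h1

lemma wt_vZ (z : Fin d) : wt (vZvec w z) = w := by
  unfold wt
  have hset : (Finset.univ.filter fun q : Q w d => vZvec w z q ≠ 0)
      = Finset.univ.map ⟨fun i : Fin w => Sum.inl (i, z),
          fun a b h => by
            have := Sum.inl.inj h
            exact (Prod.ext_iff.mp this).1⟩ := by
    ext q
    simp only [Finset.mem_filter, Finset.mem_map, Function.Embedding.coeFn_mk]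
    rcases q with ⟨i, a⟩ | p
    · by_cases ha : a = z
      · subst ha
        simp [vZvec]
        exact ⟨i, rfl⟩
      · have ha' : ¬ z = a := fun h => ha h.symm
        simp [vZvec, ha, ha']
        intro x hx
        exact ha (Prod.ext_iff.mp (Sum.inl.inj hx)).2.symm
    · simp [vZvec]
  rw [hset, Finset.card_map, Finset.card_univ, Fintype.card_fin]

lemma wt_vX (t : Fin w) : wt (vXvec (w := w) d t) = d := by
  unfold wt
  have hset : (Finset.univ.filter fun q : Q w d => vXvec d t q ≠ 0)
      = Finset.univ.map ⟨fun a : Fin d => Sum.inl (t, a),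
          fun a b h => by
            have := Sum.inl.inj h
            exact (Prod.ext_iff.mp this).2⟩ := by
    ext q
    simp only [Finset.mem_filter, Finset.mem_map, Function.Embedding.coeFn_mk]
    rcases q with ⟨i, a⟩ | p
    · by_cases hi : i = t
      · subst hi
        simp [vXvec]
        exact ⟨a, rfl⟩
      · have hi' : ¬ t = i := fun h => hi h.symm
        simp [vXvec, hi, hi']
        intro x hx
        exact hi (Prod.ext_iff.mp (Sum.inl.inj hx)).1.symm
    · simp [vXvec]
  rw [hset, Finset.card_map, Finset.card_univ, Fintype.card_fin]

/-! ### Distance lower bounds -/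

lemma Z_lower_bound (hw : 2 ≤ w) (hd : 2 ≤ d) {v : Q w d → F}
    (h1 : hgpX (repMat w) (repMat d) *ᵥ v = 0)
    (h2 : v ∉ LinearMap.range (hgpZ (repMat w) (repMat d)).vecMulLinear) :
    w ≤ wt v := by
  have hφ0 : phiZ (⟨0, by omega⟩ : Fin w) v ≠ 0 := by
    intro hzero
    apply h2
    refine mem_of_ker_of_functional
      (LinearMap.range (hgpZ (repMat w) (repMat d)).vecMulLinear)
      (LinearMap.ker (hgpX (repMat w) (repMat d)).mulVecLin)
      (phiZ ⟨0, by omega⟩) range_HZ_le_ker_HX ?_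
      (vZvec w ⟨0, by omega⟩) ?_ ?_ ?_ ?_ hzero
    · rintro x ⟨y, rfl⟩
      rw [Matrix.vecMulLinear_apply]
      exact phiZ_vanish _ y
    · exact LinearMap.mem_ker.mpr (HX_mulVec_vZ _)
    · rw [phiZ_vZ]; exact one_ne_zero
    · rw [finrank_ker_HX hw hd, finrank_range_vecMul_HZ]
    · exact LinearMap.mem_ker.mpr h1
  have hall : ∀ i : Fin w, phiZ i v ≠ 0 := by
    intro i
    rw [phiZ_const h1 (by omega) i]
    exact hφ0
  have hex : ∀ i : Fin w, ∃ a, v (Sum.inl (i, a)) ≠ 0 := by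
    intro i
    by_contra hc
    push_neg at hc
    exact hall i (by rw [phiZ_apply]; exact Finset.sum_eq_zero fun a _ => hc a)
  choose f hf using hex
  have hcard : (Finset.univ : Finset (Fin w)).card
      ≤ (Finset.univ.filter fun q : Q w d => v q ≠ 0).card := by
    apply Finset.card_le_card_of_injOn (fun i => Sum.inl (i, f i))
    · intro i _
      simp only [Finset.mem_filter, Finset.mem_univ, true_and]
      simpa using hf i
    · intro i _ j _ hij
      exact (Prod.ext_iff.mp (Sum.inl.inj hij)).1
  simpa [wt] using hcard

lemma X_lower_bound (hw : 2 ≤ w) (hd : 2 ≤ d) {v : Q w d → F}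
    (h1 : hgpZ (repMat w) (repMat d) *ᵥ v = 0)
    (h2 : v ∉ LinearMap.range (hgpX (repMat w) (repMat d)).vecMulLinear) :
    d ≤ wt v := by
  have hψ0 : psiX (⟨0, by omega⟩ : Fin d) v ≠ 0 := by
    intro hzero
    apply h2
    refine mem_of_ker_of_functional
      (LinearMap.range (hgpX (repMat w) (repMat d)).vecMulLinear)
      (LinearMap.ker (hgpZ (repMat w) (repMat d)).mulVecLin)
      (psiX ⟨0, by omega⟩) range_HX_le_ker_HZ ?_
      (vXvec d ⟨0, by omega⟩) ?_ ?_ ?_ ?_ hzero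
    · rintro x ⟨y, rfl⟩
      rw [Matrix.vecMulLinear_apply]
      exact psiX_vanish _ y
    · exact LinearMap.mem_ker.mpr (HZ_mulVec_vX _)
    · rw [psiX_vX]; exact one_ne_zero
    · rw [finrank_ker_HZ hw hd, finrank_range_vecMul_HX]
    · exact LinearMap.mem_ker.mpr h1
  have hall : ∀ a : Fin d, psiX a v ≠ 0 := by
    intro a
    rw [psiX_const h1 (by omega) a]
    exact hψ0
  have hex : ∀ a : Fin d, ∃ i, v (Sum.inl (i, a)) ≠ 0 := by
    intro a
    by_contra hc
    push_neg at hc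
    exact hall a (by rw [psiX_apply]; exact Finset.sum_eq_zero fun i _ => hc i)
  choose f hf using hex
  have hcard : (Finset.univ : Finset (Fin d)).card
      ≤ (Finset.univ.filter fun q : Q w d => v q ≠ 0).card := by
    apply Finset.card_le_card_of_injOn (fun a => Sum.inl (f a, a))
    · intro a _
      simp only [Finset.mem_filter, Finset.mem_univ, true_and]
      simpa using hf a
    · intro i _ j _ hij
      exact (Prod.ext_iff.mp (Sum.inl.inj hij)).2
  simpa [wt] using hcard

lemma sInf_eq_of {S : Set ℕ} {k : ℕ} (hmem : k ∈ S) (hlb : ∀ m ∈ S, k ≤ m) : sInf S = k :=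
  le_antisymm (Nat.sInf_le hmem) (le_csInf ⟨k, hmem⟩ hlb)


end SurfaceAux

/-- The hypergraph product of two repetition codes `R_w` and `R_d` (`w, d ≥ 2`) is the
`w × d` surface code with parameters `[[wd + (w−1)(d−1), 1, min(w,d)]]`: it has
`wd + (w−1)(d−1)` physical qubits, exactly one logical qubit, and CSS distance `min(w,d)`,
where `d_X = min{ wt v : H_Z v = 0, v ∉ rowspace(H_X) }` and
`d_Z = min{ wt v : H_X v = 0, v ∉ rowspace(H_Z) }`. -/
theorem surface_code_params (w d : ℕ) (hw : 2 ≤ w) (hd : 2 ≤ d) :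
    Fintype.card ((Fin w × Fin d) ⊕ (Fin (w - 1) × Fin (d - 1))) =
        w * d + (w - 1) * (d - 1) ∧
    (w * d + (w - 1) * (d - 1)) -
        (hgpX (repMat w) (repMat d)).rank - (hgpZ (repMat w) (repMat d)).rank = 1 ∧
    min
      (sInf {m : ℕ | ∃ v, (hgpZ (repMat w) (repMat d)).mulVec v = 0 ∧
        v ∉ LinearMap.range (hgpX (repMat w) (repMat d)).vecMulLinear ∧ wt v = m})
      (sInf {m : ℕ | ∃ v, (hgpX (repMat w) (repMat d)).mulVec v = 0 ∧
        v ∉ LinearMap.range (hgpZ (repMat w) (repMat d)).vecMulLinear ∧ wt v = m})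
    = min w d := by
  refine ⟨by simp, ?_, ?_⟩
  · rw [SurfaceAux.rank_HX, SurfaceAux.rank_HZ]
    obtain ⟨W, rfl⟩ : ∃ W, w = W + 1 := ⟨w - 1, by omega⟩
    obtain ⟨D, rfl⟩ : ∃ D, d = D + 1 := ⟨d - 1, by omega⟩
    simp only [Nat.add_sub_cancel]
    have h1 : (W+1) * (D+1) + W * D = W * (D+1) + ((W+1) * D + 1) := by ring
    rw [h1]
    omega
  · have hX : sInf {m : ℕ | ∃ v, (hgpZ (repMat w) (repMat d)).mulVec v = 0 ∧
        v ∉ LinearMap.range (hgpX (repMat w) (repMat d)).vecMulLinear ∧ wt v = m} = d := by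
      apply SurfaceAux.sInf_eq_of
      · exact ⟨SurfaceAux.vXvec d ⟨0, by omega⟩, SurfaceAux.HZ_mulVec_vX _,
          SurfaceAux.vX_not_mem _ (by omega), SurfaceAux.wt_vX _⟩
      · rintro m ⟨v, h1, h2, rfl⟩
        exact SurfaceAux.X_lower_bound hw hd h1 h2
    have hZ : sInf {m : ℕ | ∃ v, (hgpX (repMat w) (repMat d)).mulVec v = 0 ∧
        v ∉ LinearMap.range (hgpZ (repMat w) (repMat d)).vecMulLinear ∧ wt v = m} = w := by
      apply SurfaceAux.sInf_eq_of
      · exact ⟨SurfaceAux.vZvec w ⟨0, by omega⟩, SurfaceAux.HX_mulVec_vZ _,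
          SurfaceAux.vZ_not_mem _ (by omega), SurfaceAux.wt_vZ _⟩
      · rintro m ⟨v, h1, h2, rfl⟩
        exact SurfaceAux.Z_lower_bound hw hd h1 h2
    rw [hX, hZ, min_comm]
end
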